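/- Let A ∈ ℝ^{n×n} be Schur stable, B ∈ ℝ^{n×m}, G(z) = z(zI−A)^{-1}B, G₀(z) = G(z) − (1/2)B, and let Λ be symmetric with M the unique solution of M = A'MA + Λ and X = MB. Then for all z on the unit circle, G(z)*ΛG(z) = G₀(z)*X + X'G₀(z). -/

import Mathlib

open Matrix Filter Topology
open scoped ENNReal NNReal

section
attribute [local instance] Matrix.linftyOpNormedRing Matrix.linftyOpNormedAlgebra

private lemma pow_entry_tendsto_zero (n : ℕ) [NeZero n] (A : Matrix (Fin n) (Fin n) ℂ)
    (h : ∀ μ ∈ spectrum ℂ A, ‖μ‖ < 1) (i j : Fin n) :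
    Tendsto (fun k => (A ^ k) i j) atTop (𝓝 0) := by
  have hnt : Nontrivial (Matrix (Fin n) (Fin n) ℂ) := by
    have : Nonempty (Fin n) := Fin.pos_iff_nonempty.mp (Nat.pos_of_ne_zero (NeZero.ne n))
    infer_instance
  have hr : spectralRadius ℂ A < 1 := by
    have := spectrum.spectralRadius_lt_of_forall_lt A (r := 1)
      (fun z hz => by simpa using (show ‖z‖₊ < 1 from by rw [← NNReal.coe_lt_coe, coe_nnnorm, NNReal.coe_one]; exact h z hz))
    simpa using this
  obtain ⟨c, hc1, hc2⟩ := ENNReal.lt_iff_exists_nnreal_btwn.mp hr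
  have hc2' : (c : ℝ) < 1 := by exact_mod_cast ENNReal.coe_lt_one_iff.mp hc2
  have hG := spectrum.pow_nnnorm_pow_one_div_tendsto_nhds_spectralRadius A
  have hev : ∀ᶠ k : ℕ in atTop, (‖A ^ k‖₊ : ℝ≥0∞) ^ (1 / (k : ℝ)) < (c : ℝ≥0∞) :=
    hG.eventually_lt_const hc1
  have hbound : ∀ᶠ k : ℕ in atTop, ‖(A ^ k) i j‖ ≤ (c : ℝ) ^ k := by
    filter_upwards [hev, eventually_ge_atTop 1] with k hk hk1
    have hkpos : (0 : ℝ) < k := by exact_mod_cast hk1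
    have := ENNReal.rpow_lt_rpow hk hkpos
    rw [← ENNReal.rpow_mul, one_div_mul_cancel (ne_of_gt hkpos), ENNReal.rpow_one,
      ENNReal.rpow_natCast] at this
    have h2 : ‖A ^ k‖₊ < c ^ k := by exact_mod_cast this
    have h3 : ‖(A ^ k) i j‖₊ ≤ ‖A ^ k‖₊ := by
      rw [Matrix.linfty_opNNNorm_def]
      calc ‖(A ^ k) i j‖₊ ≤ ∑ j', ‖(A ^ k) i j'‖₊ :=
            Finset.single_le_sum (f := fun j' => ‖(A ^ k) i j'‖₊)
              (fun _ _ => zero_le) (Finset.mem_univ j)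
        _ ≤ _ := Finset.le_sup (f := fun i => ∑ j', ‖(A ^ k) i j'‖₊) (Finset.mem_univ i)
    have : ‖(A ^ k) i j‖₊ ≤ c ^ k := h3.trans h2.le
    exact_mod_cast this
  rw [tendsto_zero_iff_norm_tendsto_zero]
  exact squeeze_zero' (.of_forall fun k => norm_nonneg _) hbound
    (tendsto_pow_atTop_nhds_zero_of_lt_one c.coe_nonneg hc2')

end

private lemma lyap_zero (n : ℕ) [NeZero n] (A S : Matrix (Fin n) (Fin n) ℂ)
    (hA : ∀ μ ∈ spectrum ℂ A, ‖μ‖ < 1) (hS : S = Aᵀ * S * A) : S = 0 := by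
  have key : ∀ k : ℕ, S = (A ^ k)ᵀ * S * A ^ k := by
    intro k
    induction k with
    | zero => simp
    | succ k ih =>
      calc S = Aᵀ * S * A := hS
        _ = Aᵀ * ((A ^ k)ᵀ * S * A ^ k) * A := by rw [← ih]
        _ = (A ^ (k+1))ᵀ * S * A ^ (k+1) := by
            rw [pow_succ, Matrix.transpose_mul]; noncomm_ring
  ext i j
  have hlim : Tendsto (fun k => ((A ^ k)ᵀ * S * (A ^ k) : Matrix (Fin n) (Fin n) ℂ) i j)
      atTop (𝓝 0) := by
    have : ∀ k, ((A ^ k)ᵀ * S * (A ^ k) : Matrix (Fin n) (Fin n) ℂ) i j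
        = ∑ p, ∑ q, (A ^ k) p i * S p q * (A ^ k) q j := by
      intro k
      simp [Matrix.mul_apply, Finset.sum_mul, Matrix.transpose_apply]
      rw [Finset.sum_comm]
      simp only [← Matrix.transpose_pow, Matrix.transpose_apply]
    simp_rw [this]
    have : (0 : ℂ) = ∑ p : Fin n, ∑ q : Fin n, 0 := by simp
    rw [this]
    refine tendsto_finset_sum _ fun p _ => tendsto_finset_sum _ fun q _ => ?_
    have h1 := pow_entry_tendsto_zero n A hA p i
    have h2 := pow_entry_tendsto_zero n A hA q j
    simpa using (h1.mul tendsto_const_nhds).mul h2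
  have : Tendsto (fun _ : ℕ => S i j) atTop (𝓝 0) := by
    convert hlim using 1; ext k; rw [← key k]
  simpa using tendsto_nhds_unique tendsto_const_nhds this

private lemma M_symm (n : ℕ) (A Λ M : Matrix (Fin n) (Fin n) ℝ)
    (hA : ∀ μ ∈ spectrum ℂ (A.map Complex.ofReal), ‖μ‖ < 1)
    (hΛ : Λ.IsSymm) (hM : M = Aᵀ * M * A + Λ) : Mᵀ = M := by
  rcases Nat.eq_zero_or_pos n with hn | hn
  · subst hn; ext i; exact i.elim0
  haveI : NeZero n := ⟨hn.ne'⟩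
  have hMT : Mᵀ = Aᵀ * Mᵀ * A + Λ := by
    conv_lhs => rw [hM]
    simp [Matrix.transpose_add, Matrix.transpose_mul, Matrix.mul_assoc, hΛ.eq]
  have hS : M - Mᵀ = Aᵀ * (M - Mᵀ) * A := by
    nth_rewrite 1 [hM]
    nth_rewrite 1 [hMT]
    simp only [Matrix.mul_sub, Matrix.sub_mul]
    abel
  have hSc : (M - Mᵀ).map Complex.ofReal
      = (A.map Complex.ofReal)ᵀ * ((M - Mᵀ).map Complex.ofReal) * (A.map Complex.ofReal) := by
    conv_lhs => rw [hS]
    have h1 : ∀ (X Y : Matrix (Fin n) (Fin n) ℝ), (X * Y).map Complex.ofReal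
        = X.map Complex.ofReal * Y.map Complex.ofReal := fun X Y =>
      Matrix.map_mul (f := Complex.ofRealHom)
    rw [h1, h1, Matrix.transpose_map]
  have h0 : (M - Mᵀ).map Complex.ofReal = 0 :=
    lyap_zero n (A.map Complex.ofReal) _ hA hSc
  ext i j
  have h4 := congrFun (congrFun h0 i) j
  rw [Matrix.map_apply, show ((0 : Matrix (Fin n) (Fin n) ℂ) i j) = 0 from rfl] at h4
  have h5 : (M - Mᵀ) i j = 0 := by exact_mod_cast h4
  simp [Matrix.sub_apply, Matrix.transpose_apply] at h5 ⊢
  linarith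

private lemma alg_core (n m : ℕ) (Ac Mc Λc : Matrix (Fin n) (Fin n) ℂ)
    (Bc G : Matrix (Fin n) (Fin m) ℂ) (z : ℂ)
    (hzz : star z * z = 1)
    (hMH : Mcᴴ = Mc)
    (hL : Λc = Mc - Acᴴ * Mc * Ac)
    (hAG : Ac * G = z • (G - Bc)) :
    Gᴴ * Λc * G = (G - (1/2 : ℂ) • Bc)ᴴ * (Mc * Bc) + (Mc * Bc)ᴴ * (G - (1/2 : ℂ) • Bc) := by
  have key : Gᴴ * (Acᴴ * Mc * Ac) * G = (G - Bc)ᴴ * Mc * (G - Bc) := by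
    have h1 : Gᴴ * (Acᴴ * Mc * Ac) * G = (Ac * G)ᴴ * Mc * (Ac * G) := by
      simp only [conjTranspose_mul, Matrix.mul_assoc]
    rw [h1, hAG, conjTranspose_smul, Matrix.smul_mul, Matrix.smul_mul, Matrix.mul_smul,
      smul_smul, hzz, one_smul]
  rw [hL, Matrix.mul_sub, Matrix.sub_mul, key]
  simp only [conjTranspose_sub, conjTranspose_smul, conjTranspose_mul, hMH,
    Matrix.sub_mul, Matrix.mul_sub, Matrix.smul_mul, Matrix.mul_smul, Matrix.mul_assoc,
    show star ((1:ℂ)/2) = (1:ℂ)/2 by norm_num]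
  module

private lemma mapRC_conjTranspose {p q : ℕ} (X : Matrix (Fin p) (Fin q) ℝ) :
    (X.map Complex.ofReal)ᴴ = Xᵀ.map Complex.ofReal := by
  ext i j
  simp [conjTranspose_apply, Matrix.map_apply, Complex.conj_ofReal]

private lemma mapRC_mul {p q r : ℕ} (X : Matrix (Fin p) (Fin q) ℝ)
    (Y : Matrix (Fin q) (Fin r) ℝ) :
    (X * Y).map Complex.ofReal = X.map Complex.ofReal * Y.map Complex.ofReal :=
  Matrix.map_mul (f := Complex.ofRealHom)

noncomputable def Gfil {n m : ℕ} (A : Matrix (Fin n) (Fin n) ℝ)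
    (B : Matrix (Fin n) (Fin m) ℝ) (z : ℂ) : Matrix (Fin n) (Fin m) ℂ :=
  z • (z • (1 : Matrix (Fin n) (Fin n) ℂ) - A.map Complex.ofReal)⁻¹ * B.map Complex.ofReal

noncomputable def Gfil0 {n m : ℕ} (A : Matrix (Fin n) (Fin n) ℝ)
    (B : Matrix (Fin n) (Fin m) ℝ) (z : ℂ) : Matrix (Fin n) (Fin m) ℂ :=
  Gfil A B z - (1 / 2 : ℂ) • B.map Complex.ofReal

theorem quadratic_form_reduction (n m : ℕ)
    (A : Matrix (Fin n) (Fin n) ℝ) (B : Matrix (Fin n) (Fin m) ℝ)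
    (hA : ∀ μ ∈ spectrum ℂ (A.map (Complex.ofReal)), ‖μ‖ < 1)
    (Λ : Matrix (Fin n) (Fin n) ℝ) (hΛ : Λ.IsSymm)
    (M : Matrix (Fin n) (Fin n) ℝ) (hM : M = Aᵀ * M * A + Λ)
    (X : Matrix (Fin n) (Fin m) ℝ) (hX : X = M * B)
    (z : ℂ) (hz : ‖z‖ = 1) :
    (Gfil A B z)ᴴ * Λ.map Complex.ofReal * Gfil A B z =
      (Gfil0 A B z)ᴴ * X.map Complex.ofReal +
        (X.map Complex.ofReal)ᴴ * Gfil0 A B z := by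
  have hzz : star z * z = 1 := by
    rw [Complex.star_def, mul_comm, Complex.mul_conj]
    norm_cast
    rw [Complex.normSq_eq_norm_sq, hz]
    norm_num
  -- invertibility of z•1 - A on the unit circle
  set Ac := A.map Complex.ofReal with hAc
  set Bc := B.map Complex.ofReal with hBc
  set Mc := M.map Complex.ofReal with hMc
  set D := z • (1 : Matrix (Fin n) (Fin n) ℂ) - Ac with hDdef
  have hD : IsUnit D := by
    have hznot : z ∉ spectrum ℂ Ac := fun hmem => by
      have := hA z hmem; rw [hz] at this; exact lt_irrefl 1 this
    rw [spectrum.notMem_iff] at hznot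
    simpa [hDdef, Algebra.algebraMap_eq_smul_one] using hznot
  have hDdet : IsUnit D.det := (Matrix.isUnit_iff_isUnit_det _).mp hD
  have hDinv : D * D⁻¹ = 1 := Matrix.mul_nonsing_inv _ hDdet
  have hDG : D * Gfil A B z = z • Bc := by
    rw [Gfil, Matrix.smul_mul, Matrix.mul_smul, ← Matrix.mul_assoc, ← hDdef, hDinv,
      Matrix.one_mul]
  have hAG : Ac * Gfil A B z = z • (Gfil A B z - Bc) := by
    have h2 : Ac * Gfil A B z = z • Gfil A B z - z • Bc := by
      rw [← hDG, hDdef, Matrix.sub_mul, Matrix.smul_mul, Matrix.one_mul]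
      abel
    rw [h2, smul_sub]
  -- symmetry of M
  have hsym : Mᵀ = M := M_symm n A Λ M hA hΛ hM
  have hMH : Mcᴴ = Mc := by rw [hMc, mapRC_conjTranspose, hsym]
  -- Lyapunov equation mapped to ℂ
  have hL : Λ.map Complex.ofReal = Mc - Acᴴ * Mc * Ac := by
    have hΛeq : Λ = M - Aᵀ * M * A := by
      nth_rewrite 1 [hM]; abel
    rw [hΛeq, Matrix.map_sub _ (fun a b => Complex.ofReal_sub a b), mapRC_mul, mapRC_mul,
      hAc, mapRC_conjTranspose, Matrix.transpose_map]
  -- conclude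
  have hcore := alg_core n m Ac Mc (Λ.map Complex.ofReal) Bc (Gfil A B z) z hzz hMH hL hAG
  rw [hX, Gfil0, mapRC_mul, ← hBc, ← hMc]
  exact hcore
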